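/- arXiv:2305.07802 — 2 statements merged into one kernel-verified Lean document; each statement's English description precedes it below -/
import Mathlib

section
/- Let N ≥ 4 be an integer, let b ∈ ℝ with |b| < 1, and define κ(a,b) = 1 + b/a for a > 0 and ζ(a,b) = 1/2 + √(1/4 − b/a) for a > 0 with a ≥ 4b. Then for every y ∈ ℝ^{N−1} with |y| ≥ 1 and every z ∈ ℝ^{N−1}, the following equivalence holds: z = κ(|y|²,b)·y if and only if |z|² ≥ 4b and y = ζ(|z|²,b)·z. -/
open Real

/-- `κ(a,b) = 1 + b/a`. -/
noncomputable def kappaFn (a b : ℝ) : ℝ := 1 + b / a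

/-- `ζ(a,b) = 1/2 + √(1/4 − b/a)`. -/
noncomputable def zetaFn (a b : ℝ) : ℝ := 1 / 2 + Real.sqrt (1 / 4 - b / a)

theorem stmt3 (N : ℕ) (hN : 4 ≤ N) (b : ℝ) (hb : |b| < 1)
    (y z : EuclideanSpace ℝ (Fin (N - 1))) (hy : 1 ≤ ‖y‖) :
    z = kappaFn (‖y‖ ^ 2) b • y ↔ (4 * b ≤ ‖z‖ ^ 2 ∧ y = zetaFn (‖z‖ ^ 2) b • z) := by
  have hb1 : b < 1 := (abs_lt.mp hb).2
  have hb2 : -1 < b := (abs_lt.mp hb).1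
  constructor
  · intro hz
    set a := ‖y‖ ^ 2 with ha
    have ha1 : (1 : ℝ) ≤ a := by nlinarith [norm_nonneg y]
    have ha0 : (0 : ℝ) < a := by linarith
    have hκ : kappaFn a b = (a + b) / a := by unfold kappaFn; field_simp
    have hab : (0 : ℝ) < a + b := by linarith
    have hκpos : 0 < kappaFn a b := by rw [hκ]; positivity
    have hz2 : ‖z‖ ^ 2 = (a + b) ^ 2 / a := by
      rw [hz, norm_smul, mul_pow, Real.norm_eq_abs, sq_abs, hκ, ← ha]
      field_simp
    refine ⟨by rw [hz2, le_div_iff₀ ha0]; nlinarith, ?_⟩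
    have hζ : zetaFn (‖z‖ ^ 2) b = a / (a + b) := by
      unfold zetaFn
      rw [hz2]
      have h1 : 1 / 4 - b / ((a + b) ^ 2 / a) = ((a - b) / (2 * (a + b))) ^ 2 := by
        field_simp; ring
      rw [h1, Real.sqrt_sq (div_nonneg (by linarith) (by linarith))]
      field_simp; ring
    rw [hζ, hz, smul_smul, hκ]
    rw [show a / (a + b) * ((a + b) / a) = 1 by field_simp, one_smul]
  · rintro ⟨h4b, hyz⟩
    have hz0 : z ≠ 0 := by
      intro h; rw [h, smul_zero] at hyz; rw [hyz, norm_zero] at hy; linarith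
    set s := ‖z‖ ^ 2 with hs
    have hs0 : (0 : ℝ) < s := pow_pos (norm_pos_iff.mpr hz0) 2
    have hq : (0 : ℝ) ≤ 1 / 4 - b / s := by
      rw [sub_nonneg, div_le_iff₀ hs0]; linarith
    have ht : Real.sqrt (1 / 4 - b / s) ^ 2 = 1 / 4 - b / s := Real.sq_sqrt hq
    have htn : 0 ≤ Real.sqrt (1 / 4 - b / s) := Real.sqrt_nonneg _
    have hζpos : 0 < zetaFn s b := by unfold zetaFn; linarith
    have hy2 : ‖y‖ ^ 2 = zetaFn s b ^ 2 * s := by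
      rw [hyz, norm_smul, mul_pow, Real.norm_eq_abs, sq_abs, ← hs]
    have hroot : zetaFn s b ^ 2 * s - zetaFn s b * s + b = 0 := by
      have : zetaFn s b ^ 2 - zetaFn s b = -(b / s) := by
        unfold zetaFn; nlinarith [ht]
      have h3 : (zetaFn s b ^ 2 - zetaFn s b) * s = -b := by
        rw [this]; field_simp
      linear_combination h3
    have hκζ : kappaFn (‖y‖ ^ 2) b * zetaFn s b = 1 := by
      unfold kappaFn
      rw [hy2]
      have hne : zetaFn s b ^ 2 * s ≠ 0 := by positivity
      field_simp
      nlinarith [hroot]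
    nth_rewrite 2 [hyz]
    rw [smul_smul, hκζ, one_smul]
end

section
/- Let N ≥ 4 be an integer, T > 0, and let Ω_1 = {(y,τ) ∈ ℝ^{N−1}×ℝ : |y| > 1}. Suppose w is continuous on the closure of Ω_1, twice continuously differentiable in Ω_1, 2π-periodic in the τ-variable, satisfies Δ_y w + (2π/T)² ∂²w/∂τ² = 0 in Ω_1, w = 0 on ∂Ω_1 = {|y| = 1}, and w(y,τ) → 0 as |y| → ∞ uniformly in τ ∈ ℝ. Then w ≡ 0 on the closure of Ω_1. -/
open Real Filter Topology Set

lemma sd_test_max {g g' : ℝ → ℝ} {a : ℝ}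
    (hg : ∀ᶠ t in 𝓝 (0:ℝ), HasDerivAt g (g' t) t)
    (ha : HasDerivAt g' a 0) (hmax : IsLocalMax g 0) : a ≤ 0 := by
  by_contra h
  push_neg at h
  have h0 : g' 0 = 0 := hmax.hasDerivAt_eq_zero hg.self_of_nhds
  have hslope : Tendsto (fun t => g' t / t) (𝓝[≠] (0:ℝ)) (𝓝 a) := by
    have := hasDerivAt_iff_tendsto_slope.1 ha
    simp only [slope_fun_def_field, h0, sub_zero] at this
    exact this
  have hpos : ∀ᶠ t in 𝓝[>] (0:ℝ), 0 < g' t := by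
    have h1 : ∀ᶠ t in 𝓝[>] (0:ℝ), 0 < g' t / t := by
      have := (hslope.mono_left (nhdsWithin_mono _ (by intro t ht; exact ne_of_gt ht))).eventually
        (eventually_gt_nhds h)
      exact this
    filter_upwards [h1, self_mem_nhdsWithin] with t ht ht'
    have : (0:ℝ) < t := ht'
    exact (div_pos_iff.1 ht).resolve_right (fun ⟨_, h2⟩ => absurd this (not_lt.2 h2.le)) |>.1
  rw [eventually_nhdsWithin_iff] at hpos
  obtain ⟨δ1, hδ1, H1⟩ := Metric.eventually_nhds_iff.1 (hg.and (hmax.and hpos))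
  set t0 := δ1/2 with ht0
  have ht0pos : 0 < t0 := by positivity
  have hsub : Icc (0:ℝ) t0 ⊆ Metric.ball (0:ℝ) δ1 := by
    intro t ⟨h1, h2⟩
    simp only [Metric.mem_ball, Real.dist_eq, sub_zero]
    rw [abs_of_nonneg h1]; linarith
  have hmono : StrictMonoOn g (Icc 0 t0) := by
    apply strictMonoOn_of_deriv_pos (convex_Icc _ _)
    · intro t ht
      exact ((H1 (by simpa [Real.dist_eq, sub_zero] using Metric.mem_ball.1 (hsub ht))).1).continuousAt.continuousWithinAt
    · intro t ht
      rw [interior_Icc] at ht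
      have := H1 (hsub ⟨ht.1.le, ht.2.le⟩)
      rw [this.1.deriv]
      exact this.2.2 ht.1
  have hle : g t0 ≤ g 0 := (H1 (hsub ⟨ht0pos.le, le_refl t0⟩) : _).2.1
  exact absurd (hmono ⟨le_refl 0, ht0pos.le⟩ ⟨ht0pos.le, le_refl t0⟩ ht0pos) (not_lt.2 hle)


/-- Second directional derivative of `u` at `x` in direction `v`. -/
noncomputable def sdd {E : Type*} [NormedAddCommGroup E] [NormedSpace ℝ E]
    (u : E → ℝ) (x v : E) : ℝ :=
  fderiv ℝ (fun y => fderiv ℝ u y v) x v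


lemma sdd_neg {E : Type*} [NormedAddCommGroup E] [NormedSpace ℝ E]
    (u : E → ℝ) (x v : E) : sdd (fun y => -(u y)) x v = - sdd u x v := by
  unfold sdd
  have h1 : (fun y => fderiv ℝ (fun z => -(u z)) y v) = fun y => -((fun z => fderiv ℝ u z v) y) := by
    funext y; rw [fderiv_fun_neg]; simp
  rw [h1, fderiv_fun_neg]; simp

lemma sdd_le_zero_of_isLocalMax {E : Type*} [NormedAddCommGroup E] [NormedSpace ℝ E]
    {v : E → ℝ} {x : E} (hv : ContDiffAt ℝ 2 v x) (hmax : IsLocalMax v x) (u : E) :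
    sdd v x u ≤ 0 := by
  have hline : ∀ t : ℝ, HasDerivAt (fun s : ℝ => x + s • u) u t := fun t => by
    simpa using ((hasDerivAt_id t).smul_const u).const_add x
  have hcontline : Tendsto (fun t : ℝ => x + t • u) (𝓝 0) (𝓝 x) :=
    (continuous_const.add (continuous_id.smul continuous_const)).tendsto' 0 x (by simp)
  have hev : ∀ᶠ t in 𝓝 (0:ℝ), ContDiffAt ℝ 2 v (x + t • u) :=
    hcontline.eventually (hv.eventually (by simp))
  have hg : ∀ᶠ t in 𝓝 (0:ℝ),
      HasDerivAt (fun s => v (x + s • u)) (fderiv ℝ v (x + t • u) u) t := by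
    filter_upwards [hev] with t ht
    exact (ht.differentiableAt (by norm_num)).hasFDerivAt.comp_hasDerivAt t (hline t)
  have hD : HasFDerivAt (fderiv ℝ v) (fderiv ℝ (fderiv ℝ v) x) x :=
    ((hv.fderiv_right (m := 1) (by norm_num)).differentiableAt (by norm_num)).hasFDerivAt
  set Φ : (E →L[ℝ] ℝ) →L[ℝ] ℝ := ContinuousLinearMap.apply ℝ ℝ u
  have hΦD : HasFDerivAt (fun y => fderiv ℝ v y u) (Φ.comp (fderiv ℝ (fderiv ℝ v) x)) x :=
    Φ.hasFDerivAt.comp x hD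
  have ha : HasDerivAt (fun t : ℝ => fderiv ℝ v (x + t • u) u) (sdd v x u) (0:ℝ) := by
    have h1 := HasFDerivAt.comp_hasDerivAt (𝕜 := ℝ) 0 (f := fun s : ℝ => x + s • u)
        (by simpa using hΦD) (hline 0)
    have heq : sdd v x u = (Φ.comp (fderiv ℝ (fderiv ℝ v) x)) u := by
      unfold sdd; rw [hΦD.fderiv]
    rw [heq]; exact h1.congr_deriv rfl |>.congr_of_eventuallyEq (by filter_upwards with t; rfl)
  have hmaxg : IsLocalMax (fun s : ℝ => v (x + s • u)) (0:ℝ) := by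
    have := hcontline.eventually hmax
    simpa [IsLocalMax, IsMaxFilter] using this
  exact sd_test_max hg ha hmaxg

lemma sdd_ge_zero_of_isLocalMin {E : Type*} [NormedAddCommGroup E] [NormedSpace ℝ E]
    {v : E → ℝ} {x : E} (hv : ContDiffAt ℝ 2 v x) (hmin : IsLocalMin v x) (u : E) :
    0 ≤ sdd v x u := by
  have := sdd_le_zero_of_isLocalMax (v := fun y => -(v y)) (hv.neg) hmin.neg u
  rw [sdd_neg] at this; linarith

section Barrier
variable {E : Type*} [NormedAddCommGroup E] [NormedSpace ℝ E] (L : E →L[ℝ] ℝ)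

lemma b_hasFDerivAt (x : E) : HasFDerivAt (fun z => Real.exp (L z)) (Real.exp (L x) • L) x :=
  (Real.hasDerivAt_exp (L x)).comp_hasFDerivAt x L.hasFDerivAt

lemma b_contDiff : ContDiff ℝ 2 (fun z => Real.exp (L z)) :=
  (Real.contDiff_exp.of_le le_top).comp L.contDiff

lemma sdd_exp (x u : E) : sdd (fun z => Real.exp (L z)) x u = Real.exp (L x) * (L u)^2 := by
  unfold sdd
  have h1 : (fun y => fderiv ℝ (fun z => Real.exp (L z)) y u) = fun y => Real.exp (L y) * L u := by
    funext y; rw [(b_hasFDerivAt L y).fderiv]; simp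
  rw [h1]
  have h2 : HasFDerivAt (fun y => Real.exp (L y) * L u) ((L u) • (Real.exp (L x) • L)) x := by
    exact (b_hasFDerivAt L x).mul_const (L u)
  rw [h2.fderiv]
  simp; ring

lemma sdd_add_const_mul {w g : E → ℝ} {x : E} (hw : ContDiffAt ℝ 2 w x)
    (hg : ContDiff ℝ 2 g) (c : ℝ) (u : E) :
    sdd (fun y => w y + c * g y) x u = sdd w x u + c * sdd g x u := by
  unfold sdd
  have hev : (fun y => fderiv ℝ (fun z => w z + c * g z) y u)
      =ᶠ[𝓝 x] fun y => fderiv ℝ w y u + c * fderiv ℝ g y u := by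
    filter_upwards [hw.eventually (by simp)] with y hwy
    have hdw := hwy.differentiableAt (by norm_num)
    have hdg := (hg.differentiable (by norm_num)).differentiableAt (x := y)
    rw [fderiv_fun_add hdw (hdg.const_mul c), fderiv_const_mul hdg]
    simp
  rw [hev.fderiv_eq]
  have hdw2 : DifferentiableAt ℝ (fun y => fderiv ℝ w y u) x :=
    ((hw.fderiv_right (m := 1) (by norm_num)).differentiableAt (by norm_num)).clm_apply
      (differentiableAt_const u)
  have hdg2 : DifferentiableAt ℝ (fun y => fderiv ℝ g y u) x :=
    ((hg.contDiffAt.fderiv_right (m := 1) (by norm_num)).differentiableAt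
      (by norm_num)).clm_apply (differentiableAt_const u)
  rw [fderiv_fun_add hdw2 (hdg2.const_mul c), fderiv_const_mul hdg2]
  simp
end Barrier


variable {m : ℕ}

example (i : Fin m) (y : EuclideanSpace ℝ (Fin m)) : EuclideanSpace.proj i y = y i := rfl

lemma coord_le_norm (i : Fin m) (y : EuclideanSpace ℝ (Fin m)) : y i ≤ ‖y‖ := by
  calc y i ≤ |y i| := le_abs_self _
  _ ≤ ‖y‖ := by
    rw [EuclideanSpace.norm_eq]
    have : |y i| = √(‖y i‖^2) := by rw [Real.sqrt_sq_eq_abs, Real.norm_eq_abs, abs_abs]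
    rw [this]
    apply Real.sqrt_le_sqrt
    exact Finset.single_le_sum (f := fun j => ‖y j‖^2) (fun j _ => by positivity) (Finset.mem_univ i)

lemma mem_closure_of_one_le (x : EuclideanSpace ℝ (Fin m) × ℝ) (hx : 1 ≤ ‖x.1‖) :
    x ∈ closure {x : EuclideanSpace ℝ (Fin m) × ℝ | 1 < ‖x.1‖} := by
  have hxne : ‖x.1‖ ≠ 0 := by linarith
  have hseq : Tendsto (fun n : ℕ => (((1 + 1/(n+1) : ℝ)) • x.1, x.2)) atTop (𝓝 x) := by
    have h1 : Tendsto (fun n : ℕ => (1 + 1/(n+1) : ℝ)) atTop (𝓝 1) := by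
      have := tendsto_one_div_add_atTop_nhds_zero_nat (𝕜 := ℝ)
      simpa using (tendsto_const_nhds (x := (1:ℝ))).add this
    have h2 : Tendsto (fun n : ℕ => ((1 + 1/(n+1) : ℝ)) • x.1) atTop (𝓝 x.1) := by
      simpa using (h1.smul_const x.1)
    exact h2.prodMk_nhds tendsto_const_nhds
  apply mem_closure_of_tendsto hseq
  filter_upwards with n
  show 1 < ‖((1 + 1/(n+1) : ℝ)) • x.1‖
  rw [norm_smul]
  have h3 : (1:ℝ) < 1 + 1/(n+1) := by
    have : (0:ℝ) < 1/(n+1) := by positivity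
    linarith
  have h4 : ‖(1 + 1/(n+1) : ℝ)‖ = 1 + 1/(n+1) := by
    rw [Real.norm_eq_abs, abs_of_pos (by linarith)]
  rw [h4]
  nlinarith

lemma isCompact_S (R : ℝ) : IsCompact {x : EuclideanSpace ℝ (Fin m) × ℝ |
    1 ≤ ‖x.1‖ ∧ ‖x.1‖ ≤ R ∧ x.2 ∈ Icc 0 (2*π)} := by
  rw [Metric.isCompact_iff_isClosed_bounded]
  constructor
  · apply IsClosed.inter
    · exact isClosed_le continuous_const (continuous_fst.norm)
    apply IsClosed.inter
    · exact isClosed_le (continuous_fst.norm) continuous_const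
    · exact (isClosed_Icc).preimage continuous_snd
  · rw [Metric.isBounded_iff_subset_closedBall 0]
    refine ⟨max R (2*π), fun x hx => ?_⟩
    obtain ⟨h1, h2, h3, h4⟩ := hx
    simp only [Metric.mem_closedBall, dist_zero_right, Prod.norm_def]
    apply max_le
    · exact le_max_of_le_left h2
    · refine le_max_of_le_right ?_
      rw [Real.norm_eq_abs, abs_le]
      constructor <;> [linarith [Real.pi_pos]; linarith]

set_option maxHeartbeats 1000000 in
lemma key (m : ℕ) (i0 : Fin m) (T : ℝ)
    (w : EuclideanSpace ℝ (Fin m) × ℝ → ℝ)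
    (hcont : ContinuousOn w (closure {x : EuclideanSpace ℝ (Fin m) × ℝ | 1 < ‖x.1‖}))
    (hsmooth : ContDiffOn ℝ 2 w {x : EuclideanSpace ℝ (Fin m) × ℝ | 1 < ‖x.1‖})
    (hper : ∀ y τ, w (y, τ + 2 * π) = w (y, τ))
    (heq : ∀ x ∈ {x : EuclideanSpace ℝ (Fin m) × ℝ | 1 < ‖x.1‖},
      (∑ i : Fin m, sdd w x (EuclideanSpace.single i 1, 0)) +
        (2 * π / T) ^ 2 * sdd w x ((0 : EuclideanSpace ℝ (Fin m)), (1:ℝ)) = 0)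
    (hbdry : ∀ x : EuclideanSpace ℝ (Fin m) × ℝ, ‖x.1‖ = 1 → w x = 0)
    (hdecay : ∀ ε > 0, ∃ R : ℝ, ∀ (y : EuclideanSpace ℝ (Fin m)) (τ : ℝ), R ≤ ‖y‖ → |w (y, τ)| < ε)
    {ε : ℝ} (hε : 0 < ε) :
    ∀ x : EuclideanSpace ℝ (Fin m) × ℝ, 1 < ‖x.1‖ → w x ≤ ε := by
  have hopen : IsOpen {x : EuclideanSpace ℝ (Fin m) × ℝ | 1 < ‖x.1‖} :=
    isOpen_lt continuous_const continuous_fst.norm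
  by_contra hcon
  push_neg at hcon
  obtain ⟨x, hx1, hxw⟩ := hcon
  obtain ⟨R0, hR0⟩ := hdecay ε hε
  set R := max R0 (‖x.1‖ + 1) with hR
  have hxR : ‖x.1‖ < R := lt_of_lt_of_le (by linarith) (le_max_right _ _)
  have hRdecay : ∀ y τ, R ≤ ‖y‖ → |w (y, τ)| < ε :=
    fun y τ h => hR0 y τ (le_trans (le_max_left _ _) h)
  have hR1 : 1 < R := by linarith [le_max_right R0 (‖x.1‖+1)]
  set L : (EuclideanSpace ℝ (Fin m) × ℝ) →L[ℝ] ℝ :=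
    (EuclideanSpace.proj i0).comp (ContinuousLinearMap.fst ℝ _ _) with hL
  have hLle : ∀ z : EuclideanSpace ℝ (Fin m) × ℝ, L z ≤ ‖z.1‖ := fun z => coord_le_norm i0 z.1
  set δ := (w x - ε) / (2 * Real.exp R) with hδ
  have hδpos : 0 < δ := div_pos (by linarith) (by positivity)
  have hδR : δ * (2 * Real.exp R) = w x - ε := by
    rw [hδ]; field_simp
  set b : EuclideanSpace ℝ (Fin m) × ℝ → ℝ := fun z => Real.exp (L z) with hb
  set v : EuclideanSpace ℝ (Fin m) × ℝ → ℝ := fun z => w z + δ * b z with hv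
  have hbpos : ∀ z, 0 < b z := fun z => Real.exp_pos _
  have hbleR : ∀ z : EuclideanSpace ℝ (Fin m) × ℝ, ‖z.1‖ ≤ R → b z ≤ Real.exp R :=
    fun z hz => Real.exp_le_exp.2 (le_trans (hLle z) hz)
  have hLpair : ∀ (y : EuclideanSpace ℝ (Fin m)) (τ τ' : ℝ), L (y, τ) = L (y, τ') := fun y τ τ' => rfl
  have hvper : ∀ (y : EuclideanSpace ℝ (Fin m)), Function.Periodic (fun τ => v (y, τ)) (2*π) := by
    intro y τ
    simp only [hv, hb]
    rw [hper, hLpair y (τ + 2*π) τ]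
  set S : Set (EuclideanSpace ℝ (Fin m) × ℝ) :=
    {z | 1 ≤ ‖z.1‖ ∧ ‖z.1‖ ≤ R ∧ z.2 ∈ Icc 0 (2*π)} with hS
  obtain ⟨τ', hτ'mem, hτ'eq⟩ := (hvper x.1).exists_mem_Ico₀ Real.two_pi_pos x.2
  set x0 : EuclideanSpace ℝ (Fin m) × ℝ := (x.1, τ') with hx0
  have hx0S : x0 ∈ S := ⟨hx1.le, hxR.le, Ico_subset_Icc_self hτ'mem⟩
  have hvx0 : v x0 = v x := hτ'eq.symm
  have hvcont : ContinuousOn v S := by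
    apply ContinuousOn.add
    · exact (hcont.mono (fun z hz => mem_closure_of_one_le z hz.1))
    · exact (continuous_const.mul (Real.continuous_exp.comp L.continuous)).continuousOn
  obtain ⟨z, hzS, hzmax⟩ := (isCompact_S R).exists_isMaxOn ⟨x0, hx0S⟩ hvcont
  have hvzgt : ε + 2*δ*Real.exp R < v z := by
    have h1 : v x0 ≤ v z := hzmax hx0S
    have h2 : v x = w x + δ * b x := rfl
    nlinarith [hbpos x]
  have hz1 : 1 < ‖z.1‖ := by
    rcases lt_or_eq_of_le hzS.1 with h | h
    · exact h
    · exfalso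
      have hwz : w z = 0 := hbdry z h.symm
      have : v z = δ * b z := by simp [hv, hwz]
      have hble := hbleR z hzS.2.1
      nlinarith [Real.exp_pos R]
  have hzR : ‖z.1‖ < R := by
    rcases lt_or_eq_of_le hzS.2.1 with h | h
    · exact h
    · exfalso
      have := hRdecay z.1 z.2 h.ge
      have hwz : w (z.1, z.2) = w z := rfl
      have hble := hbleR z hzS.2.1
      have : v z = w z + δ * b z := rfl
      nlinarith [abs_lt.1 (hRdecay z.1 z.2 h.ge), Real.exp_pos R]
  have hlocmax : IsLocalMax v z := by
    have hUopen : IsOpen {p : EuclideanSpace ℝ (Fin m) × ℝ | 1 < ‖p.1‖ ∧ ‖p.1‖ < R} :=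
      (isOpen_lt continuous_const continuous_fst.norm).inter
        (isOpen_lt continuous_fst.norm continuous_const)
    filter_upwards [hUopen.mem_nhds ⟨hz1, hzR⟩] with p hp
    obtain ⟨τ'', hτ''mem, hτ''eq⟩ := (hvper p.1).exists_mem_Ico₀ Real.two_pi_pos p.2
    have hmem : ((p.1, τ'') : EuclideanSpace ℝ (Fin m) × ℝ) ∈ S :=
      ⟨hp.1.le, hp.2.le, Ico_subset_Icc_self hτ''mem⟩
    calc v p = v (p.1, τ'') := hτ''eq
    _ ≤ v z := hzmax hmem
  have hzmem : z ∈ {x : EuclideanSpace ℝ (Fin m) × ℝ | 1 < ‖x.1‖} := hz1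
  have hwz2 : ContDiffAt ℝ 2 w z := hsmooth.contDiffAt (hopen.mem_nhds hzmem)
  have hvz2 : ContDiffAt ℝ 2 v z := hwz2.add (contDiffAt_const.mul (b_contDiff L).contDiffAt)
  have hsddle : ∀ u, sdd v z u ≤ 0 := fun u => sdd_le_zero_of_isLocalMax hvz2 hlocmax u
  have hlin : ∀ u, sdd v z u = sdd w z u + δ * (Real.exp (L z) * (L u)^2) := by
    intro u
    rw [hv, hb]
    rw [sdd_add_const_mul hwz2 (b_contDiff L) δ u, sdd_exp L z u]
  have hLe : ∀ i : Fin m, L ((EuclideanSpace.single i 1 : EuclideanSpace ℝ (Fin m)), (0:ℝ))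
      = if i0 = i then 1 else 0 := by
    intro i
    simp [hL, EuclideanSpace.single_apply]
  have hL0 : L ((0 : EuclideanSpace ℝ (Fin m)), (1:ℝ)) = 0 := by simp [hL]
  have hneg : (∑ i : Fin m, sdd v z (EuclideanSpace.single i 1, 0)) +
      (2*π/T)^2 * sdd v z ((0 : EuclideanSpace ℝ (Fin m)), (1:ℝ)) ≤ 0 := by
    apply add_nonpos
    · exact Finset.sum_nonpos (fun i _ => hsddle _)
    · exact mul_nonpos_of_nonneg_of_nonpos (sq_nonneg _) (hsddle _)
  have hpos : (∑ i : Fin m, sdd v z (EuclideanSpace.single i 1, 0)) +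
      (2*π/T)^2 * sdd v z ((0 : EuclideanSpace ℝ (Fin m)), (1:ℝ)) = δ * Real.exp (L z) := by
    have hsum1 : ∑ i : Fin m, sdd v z (EuclideanSpace.single i 1, 0)
        = (∑ i : Fin m, sdd w z (EuclideanSpace.single i 1, 0)) + δ * Real.exp (L z) := by
      rw [Finset.sum_congr rfl (fun i _ => by rw [hlin, hLe i])]
      rw [Finset.sum_add_distrib]
      congr 1
      have : ∀ i : Fin m, δ * (Real.exp (L z) * (if i0 = i then (1:ℝ) else 0)^2)
          = if i0 = i then δ * Real.exp (L z) else 0 := by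
        intro i; split <;> simp
      rw [Finset.sum_congr rfl (fun i _ => this i), Finset.sum_ite_eq]
      simp
    rw [hsum1, hlin, hL0]
    have := heq z hzmem
    ring_nf
    ring_nf at this
    linarith
  rw [hpos] at hneg
  nlinarith [Real.exp_pos (L z), hδpos]

theorem stmt4 (N : ℕ) (hN : 4 ≤ N) (T : ℝ) (hT : 0 < T)
    (w : EuclideanSpace ℝ (Fin (N - 1)) × ℝ → ℝ)
    (hcont : ContinuousOn w
      (closure {x : EuclideanSpace ℝ (Fin (N - 1)) × ℝ | 1 < ‖x.1‖}))
    (hsmooth : ContDiffOn ℝ 2 w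
      {x : EuclideanSpace ℝ (Fin (N - 1)) × ℝ | 1 < ‖x.1‖})
    (hper : ∀ (y : EuclideanSpace ℝ (Fin (N - 1))) (τ : ℝ),
      w (y, τ + 2 * π) = w (y, τ))
    (heq : ∀ x ∈ {x : EuclideanSpace ℝ (Fin (N - 1)) × ℝ | 1 < ‖x.1‖},
      (∑ i : Fin (N - 1), sdd w x (EuclideanSpace.single i 1, 0)) +
        (2 * π / T) ^ 2 * sdd w x ((0 : EuclideanSpace ℝ (Fin (N - 1))), (1 : ℝ)) = 0)
    (hbdry : ∀ x : EuclideanSpace ℝ (Fin (N - 1)) × ℝ, ‖x.1‖ = 1 → w x = 0)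
    (hdecay : ∀ ε > 0, ∃ R : ℝ, ∀ (y : EuclideanSpace ℝ (Fin (N - 1))) (τ : ℝ),
      R ≤ ‖y‖ → |w (y, τ)| < ε) :
    ∀ x ∈ closure {x : EuclideanSpace ℝ (Fin (N - 1)) × ℝ | 1 < ‖x.1‖}, w x = 0 := by

  have i0 : Fin (N - 1) := ⟨0, by omega⟩
  have hkey1 : ∀ ε > 0, ∀ x : EuclideanSpace ℝ (Fin (N-1)) × ℝ, 1 < ‖x.1‖ → w x ≤ ε :=
    fun ε hε => key (N-1) i0 T w hcont hsmooth hper heq hbdry hdecay hε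
  have heqneg : ∀ x ∈ {x : EuclideanSpace ℝ (Fin (N - 1)) × ℝ | 1 < ‖x.1‖},
      (∑ i : Fin (N - 1), sdd (fun y => -(w y)) x (EuclideanSpace.single i 1, 0)) +
        (2 * π / T) ^ 2 * sdd (fun y => -(w y)) x ((0 : EuclideanSpace ℝ (Fin (N - 1))), (1 : ℝ)) = 0 := by
    intro x hx
    simp only [sdd_neg]
    have h1 := heq x hx
    rw [Finset.sum_neg_distrib]
    linarith
  have hkey2 : ∀ ε > 0, ∀ x : EuclideanSpace ℝ (Fin (N-1)) × ℝ, 1 < ‖x.1‖ → -(w x) ≤ ε :=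
    fun ε hε => key (N-1) i0 T (fun y => -(w y)) hcont.neg hsmooth.neg
      (fun y τ => by simp only [hper y τ])
      heqneg
      (fun x hx => by simp only [hbdry x hx]; ring)
      (fun ε' hε' => by
        obtain ⟨R, hR⟩ := hdecay ε' hε'
        exact ⟨R, fun y τ h => by simpa [abs_neg] using hR y τ h⟩) hε
  intro x hx
  have hx1 : 1 ≤ ‖x.1‖ := by
    have hsub : closure {x : EuclideanSpace ℝ (Fin (N-1)) × ℝ | 1 < ‖x.1‖}
        ⊆ {x : EuclideanSpace ℝ (Fin (N-1)) × ℝ | 1 ≤ ‖x.1‖} :=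
      closure_minimal (fun z (hz : 1 < ‖z.1‖) => show (1:ℝ) ≤ ‖z.1‖ from hz.le)
        (isClosed_le continuous_const continuous_fst.norm)
    exact hsub hx
  rcases eq_or_lt_of_le hx1 with h | h
  · exact hbdry x h.symm
  · by_contra hne
    rcases lt_or_gt_of_ne hne with hlt | hgt
    · have := hkey2 (-(w x)/2) (by linarith) x h; linarith
    · have := hkey1 (w x / 2) (by linarith) x h; linarith
end
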